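/- arXiv:2110.07081 — 4 statements merged into one kernel-verified Lean document; each statement's English description precedes it below -/
import Mathlib

section
/- Let A be a C*-algebra and let a, b be positive elements of A. Then the following are equivalent: (i) a ≼_A b; (ii) (a − η)_+ ≼_A b for every η > 0; (iii) for every η > 0 there exists δ > 0 such that (a − η)_+ ≼_A (b − δ)_+. -/
set_option maxHeartbeats 1000000


/-- `a` is Cuntz subequivalent to `b` in `A`: for every `ε > 0` there is `y ∈ A` with
`‖y * b * y* - a‖ < ε`. -/
def CuntzLE {A : Type*} [NonUnitalNormedRing A] [StarRing A] (a b : A) : Prop :=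
  ∀ ε > (0 : ℝ), ∃ y : A, ‖y * b * star y - a‖ < ε

/-- `(a - ε)₊`, the image of `a` under the continuous functional calculus applied to
`t ↦ max (t - ε) 0`. -/
noncomputable def cutdown {A : Type*} [NonUnitalCStarAlgebra A] (a : A) (ε : ℝ) : A :=
  cfcₙ (fun t : ℝ => max (t - ε) 0) a

section basic
variable {A : Type*} [NonUnitalNormedRing A] [StarRing A] [CStarRing A]

omit [CStarRing A] in
lemma cuntzLE_of_conj_eq {a b : A} (h : ∃ y : A, y * b * star y = a) : CuntzLE a b := by
  obtain ⟨y, hy⟩ := h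
  exact fun ε hε => ⟨y, by simp [hy, hε]⟩

lemma CuntzLE.trans {a b c : A} (h1 : CuntzLE a b) (h2 : CuntzLE b c) : CuntzLE a c := by
  intro ε hε
  obtain ⟨y, hy⟩ := h1 (ε / 2) (by positivity)
  obtain ⟨z, hz⟩ := h2 (ε / 2 / (‖y‖ * ‖y‖ + 1)) (by positivity)
  refine ⟨y * z, ?_⟩
  have key : y * z * c * star (y * z) - a
      = y * (z * c * star z - b) * star y + (y * b * star y - a) := by
    simp only [star_mul]
    noncomm_ring
  calc ‖y * z * c * star (y * z) - a‖
      ≤ ‖y * (z * c * star z - b) * star y‖ + ‖y * b * star y - a‖ := by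
        rw [key]; exact norm_add_le _ _
    _ < ε / 2 + ε / 2 := by
        refine add_lt_add_of_le_of_lt ?_ hy
        calc ‖y * (z * c * star z - b) * star y‖
            ≤ ‖y‖ * ‖z * c * star z - b‖ * ‖star y‖ :=
              (norm_mul_le _ _).trans (by gcongr; exact norm_mul_le _ _)
          _ = ‖y‖ * ‖y‖ * ‖z * c * star z - b‖ := by rw [norm_star]; ring
          _ ≤ (‖y‖ * ‖y‖ + 1) * ‖z * c * star z - b‖ :=
              mul_le_mul_of_nonneg_right (by linarith) (norm_nonneg _)
          _ ≤ (‖y‖ * ‖y‖ + 1) * (ε / 2 / (‖y‖ * ‖y‖ + 1)) := by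
              gcongr
          _ = ε / 2 := by
              field_simp
    _ = ε := by ring

end basic

section cutdown
variable {A : Type*} [NonUnitalCStarAlgebra A] [PartialOrder A] [StarOrderedRing A]

lemma cutdown_nonneg {a : A} (ε : ℝ) : 0 ≤ cutdown a ε :=
  cfcₙ_nonneg fun x _ => le_max_right _ _

lemma norm_cutdown_sub_le {a : A} {ε : ℝ} (ha : 0 ≤ a) (hε : 0 ≤ ε) :
    ‖cutdown a ε - a‖ ≤ ε := by
  have ha' : IsSelfAdjoint a := .of_nonneg ha
  have h1 : cutdown a ε - a = cfcₙ (fun t : ℝ => max (t - ε) 0 - t) a := by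
    rw [cfcₙ_sub _ _ a (by fun_prop) (by simp [hε]) (by fun_prop) rfl, cfcₙ_id' ℝ a]
    rfl
  rw [h1]
  refine norm_cfcₙ_le fun x hx => ?_
  have hx0 : 0 ≤ x := quasispectrum_nonneg_of_nonneg a ha x hx
  rw [Real.norm_eq_abs, abs_le]
  rcases le_total x ε with h | h
  · constructor <;> simp [max_eq_right (by linarith : x - ε ≤ 0)] <;> linarith
  · constructor <;> simp [max_eq_left (by linarith : (0:ℝ) ≤ x - ε)] <;> linarith

lemma cutdown_cutdown {a : A} {η δ : ℝ} (ha : 0 ≤ a) (hη : 0 ≤ η) (hδ : 0 ≤ δ) :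
    cutdown (cutdown a η) δ = cutdown a (η + δ) := by
  have ha' : IsSelfAdjoint a := .of_nonneg ha
  unfold cutdown
  rw [← cfcₙ_comp (fun t : ℝ => max (t - δ) 0) (fun t : ℝ => max (t - η) 0) a
    (by fun_prop) (by simp [hδ]) (by fun_prop) (by simp [hη]) ha']
  refine cfcₙ_congr fun t _ => ?_
  show max (max (t - η) 0 - δ) 0 = max (t - (η + δ)) 0
  rcases le_total (t - η) 0 with h | h
  · rw [max_eq_right h, max_eq_right (by linarith), max_eq_right (by linarith)]
  · rw [max_eq_left h]
    congr 1
    ring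

lemma cutdown_eq_conj {b : A} {δ : ℝ} (hb : 0 ≤ b) (hδ : 0 < δ) :
    ∃ w : A, w * b * star w = cutdown b δ := by
  have hb' : IsSelfAdjoint b := .of_nonneg hb
  set n : ℝ → ℝ := fun t => max (t - δ) 0 with hn
  set f : ℝ → ℝ := fun t => Real.sqrt (n t) / Real.sqrt (max t δ) with hf
  have hden : ∀ t : ℝ, 0 < Real.sqrt (max t δ) := fun t =>
    Real.sqrt_pos.mpr (lt_of_lt_of_le hδ (le_max_right _ _))
  have hfc : Continuous f := by
    apply Continuous.div (by fun_prop) (by fun_prop)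
    exact fun t => (hden t).ne'
  have hf0 : f 0 = 0 := by
    simp only [hf, hn]
    rw [max_eq_right (by linarith : (0:ℝ) - δ ≤ 0), Real.sqrt_zero, zero_div]
  refine ⟨cfcₙ f b, ?_⟩
  rw [(cfcₙ_predicate f b).star_eq]
  have h0 : cfcₙ f b * b * cfcₙ f b = cfcₙ f b * cfcₙ (id : ℝ → ℝ) b * cfcₙ f b := by
    rw [cfcₙ_id ℝ b]
  rw [h0, ← cfcₙ_mul f id b hfc.continuousOn hf0 (by fun_prop) rfl,
    ← cfcₙ_mul (fun x => f x * id x) f b ((hfc.mul continuous_id).continuousOn) (by simp [hf0])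
      hfc.continuousOn hf0]
  refine cfcₙ_congr fun t ht => ?_
  have ht0 : 0 ≤ t := quasispectrum_nonneg_of_nonneg b hb t ht
  have hn0 : 0 ≤ n t := le_max_right _ _
  have hd0 : (0:ℝ) ≤ max t δ := le_trans hδ.le (le_max_right _ _)
  have e1 : f t * t * f t = n t * (t / max t δ) := by
    rw [hf]
    simp only
    rw [div_mul_eq_mul_div, div_mul_div_comm,
      show Real.sqrt (n t) * t * Real.sqrt (n t)
        = Real.sqrt (n t) * Real.sqrt (n t) * t from by ring,
      Real.mul_self_sqrt hn0, Real.mul_self_sqrt hd0, mul_div_assoc]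
  show f t * t * f t = n t
  rw [e1]
  rcases le_or_gt t δ with h | h
  · have : n t = 0 := max_eq_right (by linarith)
    rw [this, zero_mul]
  · rw [max_eq_left h.le, div_self (by linarith), mul_one]

end cutdown

section L1
variable {A : Type*} [NonUnitalCStarAlgebra A] [PartialOrder A] [StarOrderedRing A]

open Unitization in
/-- If `0 ≤ a ≤ b`, then `a` is Cuntz subequivalent to `b`. -/
lemma cuntzLE_of_le {a b : A} (ha : 0 ≤ a) (hab : a ≤ b) : CuntzLE a b := by
  have hb : 0 ≤ b := ha.trans hab
  have ha' : IsSelfAdjoint a := .of_nonneg ha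
  have hb' : IsSelfAdjoint b := .of_nonneg hb
  intro ε hε
  set δ : ℝ := ε / 2 with hδdef
  have hδ : 0 < δ := by positivity
  set m : ℝ → ℝ := fun t => max t 0 + δ with hm
  have hm0 : ∀ t, 0 < m t := fun t => add_pos_of_nonneg_of_pos (le_max_right t 0) hδ
  have hmt : ∀ t, t ≤ m t := fun t => le_add_of_le_of_nonneg (le_max_left t 0) hδ.le
  set r : ℝ → ℝ := fun t => (Real.sqrt (m t))⁻¹ with hr
  have hrc : Continuous r :=
    Continuous.inv₀ (by fun_prop) (fun t => (Real.sqrt_pos.mpr (hm0 t)).ne')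
  set k : ℝ := (Real.sqrt δ)⁻¹ with hk
  set h : ℝ → ℝ := fun t => r t - k with hh
  have hh0 : h 0 = 0 := by simp [hh, hr, hm, hk]
  have hhc : Continuous h := hrc.sub continuous_const
  set sq : ℝ → ℝ := fun t => Real.sqrt (max t 0) with hsq
  have hsq0 : sq 0 = 0 := by simp [hsq]
  have hsqc : Continuous sq := by fun_prop
  set w : ℝ → ℝ := fun t => r t * t * r t with hw
  have hwc : Continuous w := (hrc.mul continuous_id).mul hrc
  have hwt : ∀ t, w t = t / m t := by
    intro t
    rw [hw]
    simp only
    rw [hr]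
    simp only
    rw [show (Real.sqrt (m t))⁻¹ * t * (Real.sqrt (m t))⁻¹
        = t * ((Real.sqrt (m t)) * (Real.sqrt (m t)))⁻¹ from by
      rw [mul_inv]; ring]
    rw [Real.mul_self_sqrt (hm0 t).le, div_eq_mul_inv]
  have h1w : ∀ t, 0 ≤ 1 - w t := by
    intro t
    rw [hwt t, sub_nonneg, div_le_one (hm0 t)]
    exact hmt t
  set s : ℝ → ℝ := fun t => Real.sqrt (1 - w t) with hs
  have hsc : Continuous s := by
    apply Real.continuous_sqrt.comp
    exact continuous_const.sub hwc
  -- the witness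
  set y : A := cfcₙ sq a * cfcₙ h b + k • cfcₙ sq a with hy
  refine ⟨y, ?_⟩
  -- unitization elements
  set a' : Unitization ℂ A := (a : Unitization ℂ A) with ha'def
  set b' : Unitization ℂ A := (b : Unitization ℂ A) with hb'def
  have ha'' : (0 : Unitization ℂ A) ≤ a' := inr_nonneg_iff.mpr ha
  have hb'' : (0 : Unitization ℂ A) ≤ b' := inr_nonneg_iff.mpr hb
  have hab' : a' ≤ b' := (inr_le_iff a b).mpr hab
  set S : Unitization ℂ A := cfc sq a' with hS
  set R : Unitization ℂ A := cfc r b' with hR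
  set T : Unitization ℂ A := cfc s b' with hT
  have hSsa : star S = S := (cfc_predicate sq a').star_eq
  have hRsa : star R = R := (cfc_predicate r b').star_eq
  have hTsa : star T = T := (cfc_predicate s b').star_eq
  have ha'sa : IsSelfAdjoint a' := ha'.inr ℂ
  have hb'sa : IsSelfAdjoint b' := hb'.inr ℂ
  have hspa : ∀ t ∈ spectrum ℝ a', 0 ≤ t := fun t ht => spectrum_nonneg_of_nonneg ha'' ht
  have hspb : ∀ t ∈ spectrum ℝ b', 0 ≤ t := fun t ht => spectrum_nonneg_of_nonneg hb'' ht
  -- y as element of the unitization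
  have hyinr : (y : Unitization ℂ A) = S * R := by
    rw [hy]
    push_cast [Unitization.inr_add, Unitization.inr_mul, Unitization.inr_smul]
    rw [Unitization.real_cfcₙ_eq_cfc_inr a sq hsq0, Unitization.real_cfcₙ_eq_cfc_inr b h hh0]
    have : R = cfc h b' + algebraMap ℝ (Unitization ℂ A) k := by
      rw [hR, show r = fun t => h t + k from by funext t; simp [hh],
        cfc_add b' h (fun _ => k) hhc.continuousOn (by fun_prop), cfc_const k b' hb'sa]
    rw [this, mul_add, Algebra.algebraMap_eq_smul_one, mul_smul_comm, mul_one]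
  -- S * S = a'
  have hSS : S * S = a' := by
    rw [hS, ← cfc_mul sq sq a' hsqc.continuousOn hsqc.continuousOn]
    calc cfc (fun t => sq t * sq t) a' = cfc (id : ℝ → ℝ) a' := by
          refine cfc_congr fun t ht => ?_
          rw [hsq]
          simp only [id]
          rw [Real.mul_self_sqrt (le_max_right t 0), max_eq_left (hspa t ht)]
      _ = a' := cfc_id ℝ a'
  -- R * b' * R = cfc w b'
  have hRbR : R * b' * R = cfc w b' := by
    have e : R * b' * R = R * cfc (id : ℝ → ℝ) b' * R := by rw [cfc_id ℝ b']
    rw [e, hR, ← cfc_mul r id b' hrc.continuousOn (by fun_prop),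
      ← cfc_mul (fun x => r x * id x) r b' ((hrc.mul continuous_id).continuousOn) hrc.continuousOn]
    rfl
  -- T * T
  have hTT : T * T = cfc (fun t => 1 - w t) b' := by
    rw [hT, ← cfc_mul s s b' hsc.continuousOn hsc.continuousOn]
    exact cfc_congr fun t _ => Real.mul_self_sqrt (h1w t)
  -- main difference identity
  have hdiff : ((a - y * b * star y : A) : Unitization ℂ A) = (S * T) * star (S * T) := by
    push_cast [Unitization.inr_sub, Unitization.inr_mul, Unitization.inr_star]
    rw [hyinr]
    rw [star_mul, hSsa, hRsa]
    calc a' - S * R * b' * (R * S)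
        = a' - S * (R * b' * R) * S := by noncomm_ring
      _ = S * S - S * cfc w b' * S := by rw [hRbR, hSS]
      _ = S * ((1 : Unitization ℂ A) - cfc w b') * S := by noncomm_ring
      _ = S * (T * T) * S := by
          have e5 : (1 : Unitization ℂ A) - cfc w b' = cfc (fun t => 1 - w t) b' := by
            have e6 := cfc_sub (fun _ => (1:ℝ)) w b' (by fun_prop) hwc.continuousOn
            rw [cfc_const 1 b' hb'sa, map_one] at e6
            exact e6.symm
          rw [hTT, ← e5]
      _ = (S * T) * star (S * T) := by
          rw [star_mul, hSsa, hTsa]; noncomm_ring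
  -- norm estimate
  have hnorm : ‖a - y * b * star y‖ ≤ δ := by
    rw [← Unitization.norm_inr (𝕜 := ℂ) (a - y * b * star y)]
    rw [hdiff]
    rw [CStarRing.norm_self_mul_star, ← CStarRing.norm_star_mul_self]
    have e2 : star (S * T) * (S * T) = T * a' * T := by
      rw [star_mul, hSsa, hTsa, show T * S * (S * T) = T * (S * S) * T from by noncomm_ring,
        hSS]
    rw [e2]
    have hTaT : (0 : Unitization ℂ A) ≤ T * a' * T := by
      have := star_left_conjugate_nonneg ha'' T
      rwa [hTsa] at this
    have hle : T * a' * T ≤ T * b' * T := by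
      have := star_left_conjugate_le_conjugate hab' T
      rwa [hTsa] at this
    refine (CStarAlgebra.norm_le_norm_of_nonneg_of_le hTaT hle).trans ?_
    -- ‖T * b' * T‖ ≤ δ
    have e3 : T * b' * T = cfc (fun t => s t * t * s t) b' := by
      have e : T * b' * T = T * cfc (id : ℝ → ℝ) b' * T := by rw [cfc_id ℝ b']
      rw [e, hT, ← cfc_mul s id b' hsc.continuousOn (by fun_prop),
        ← cfc_mul (fun x => s x * id x) s b' ((hsc.mul continuous_id).continuousOn) hsc.continuousOn]
      rfl
    rw [e3]
    refine norm_cfc_le hδ.le fun t ht => ?_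
    have ht0 : 0 ≤ t := hspb t ht
    have e4 : s t * t * s t = (1 - w t) * t := by
      rw [hs, show Real.sqrt (1 - w t) * t * Real.sqrt (1 - w t)
        = Real.sqrt (1 - w t) * Real.sqrt (1 - w t) * t from by ring,
        Real.mul_self_sqrt (h1w t)]
    rw [e4, Real.norm_eq_abs, abs_of_nonneg (mul_nonneg (h1w t) ht0)]
    have hmt' : m t = t + δ := by rw [hm]; simp [max_eq_left ht0]
    rw [hwt t, hmt']
    rw [show (1 - t / (t + δ)) * t = δ * t / (t + δ) from by
      field_simp
      ring]
    rw [div_le_iff₀ (by positivity)]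
    nlinarith [hδ.le, ht0]
  have : ‖y * b * star y - a‖ = ‖a - y * b * star y‖ := norm_sub_rev _ _
  rw [this]
  exact lt_of_le_of_lt hnorm (by rw [hδdef]; linarith)

end L1

section L2
variable {A : Type*} [NonUnitalCStarAlgebra A] [PartialOrder A] [StarOrderedRing A]

/-- Rørdam's lemma, approximate version. -/
lemma cuntzLE_cutdown_of_norm_lt {c x : A} (hc : 0 ≤ c) (hx : 0 ≤ x) {ε : ℝ}
    (hlt : ‖c - x‖ < ε) : CuntzLE (cutdown c ε) x := by
  have hc' : IsSelfAdjoint c := .of_nonneg hc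
  set ε' : ℝ := ‖c - x‖ with hε'
  have hε'0 : 0 ≤ ε' := norm_nonneg _
  have hε : 0 < ε := lt_of_le_of_lt hε'0 hlt
  set d : ℝ → ℝ := fun t => max t ε - ε' with hd
  have hd0 : ∀ t, 0 < d t := fun t => by
    have : ε ≤ max t ε := le_max_right t ε
    rw [hd]; simp only; linarith
  set n : ℝ → ℝ := fun t => max (t - ε) 0 with hn
  have hn0 : ∀ t, 0 ≤ n t := fun t => le_max_right _ _
  set g : ℝ → ℝ := fun t => Real.sqrt (n t / d t) with hg
  have hgc : Continuous g := by
    apply Real.continuous_sqrt.comp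
    exact Continuous.div (by fun_prop) (by fun_prop) (fun t => (hd0 t).ne')
  have hg0 : g 0 = 0 := by
    rw [hg]
    simp only [hn]
    rw [max_eq_right (by linarith : (0:ℝ) - ε ≤ 0), zero_div, Real.sqrt_zero]
  have hgsq : ∀ t, g t * g t = n t / d t := fun t =>
    Real.mul_self_sqrt (div_nonneg (hn0 t) (hd0 t).le)
  set G : A := cfcₙ g c with hG
  have hGsa : star G = G := (cfcₙ_predicate g c).star_eq
  -- key conjugation inequality from `conjugate_le_norm_smul`
  have key : G * c * G ≤ G * x * G + ε' • (G * G) := by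
    have h1 : G * (c - x) * G ≤ ε' • (G * G) := by
      have := CStarAlgebra.star_left_conjugate_le_norm_smul (a := G) (b := c - x)
        (hc'.sub (IsSelfAdjoint.of_nonneg hx))
      rwa [hGsa] at this
    have h2 : G * c * G = G * (c - x) * G + G * x * G := by noncomm_ring
    rw [h2]
    calc G * (c - x) * G + G * x * G ≤ ε' • (G * G) + G * x * G :=
          add_le_add h1 le_rfl
      _ = G * x * G + ε' • (G * G) := add_comm _ _
  -- identify G * c * G
  have hGcG : G * c * G = cutdown c ε + cfcₙ (fun t => ε' * (g t * g t)) c := by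
    have e0 : G * c * G = G * cfcₙ (id : ℝ → ℝ) c * G := by rw [cfcₙ_id ℝ c]
    rw [e0, hG, ← cfcₙ_mul g id c hgc.continuousOn hg0 (by fun_prop) rfl,
      ← cfcₙ_mul (fun x => g x * id x) g c ((hgc.mul continuous_id).continuousOn) (by simp [hg0])
        hgc.continuousOn hg0,
      show cutdown c ε = cfcₙ (fun t : ℝ => max (t - ε) 0) c from rfl,
      ← cfcₙ_add (fun t => max (t - ε) 0) (fun t => ε' * (g t * g t)) c
        (by fun_prop) (by show max (0 - ε) 0 = 0; rw [max_eq_right (by linarith)])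
        ((continuous_const.mul (hgc.mul hgc)).continuousOn) (by simp [hg0])]
    refine cfcₙ_congr fun t ht => ?_
    have ht0 : 0 ≤ t := quasispectrum_nonneg_of_nonneg c hc t ht
    show g t * id t * g t = max (t - ε) 0 + ε' * (g t * g t)
    have e1 : g t * id t * g t = n t / d t * t := by
      rw [show g t * id t * g t = g t * g t * t from by simp [id]; ring, hgsq t]
    rw [e1, hgsq t]
    rcases le_or_gt t ε with hcase | hcase
    · have hnt : n t = 0 := max_eq_right (by linarith)
      rw [show max (t - ε) 0 = n t from rfl, hnt]
      simp
    · have hdt : d t = t - ε' := by rw [hd]; simp [max_eq_left hcase.le]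
      have hnt : n t = t - ε := max_eq_left (by linarith)
      have hne : t - ε' ≠ 0 := by rw [← hdt]; exact (hd0 t).ne'
      rw [show max (t - ε) 0 = n t from rfl, hnt, hdt]
      field_simp
      ring
  -- identify the smul term
  have hsmul : ε' • (G * G) = cfcₙ (fun t => ε' * (g t * g t)) c := by
    rw [hG, ← cfcₙ_mul g g c hgc.continuousOn hg0 hgc.continuousOn hg0,
      ← cfcₙ_smul ε' (fun t => g t * g t) c ((hgc.mul hgc).continuousOn) (by simp [hg0])]
    simp only [smul_eq_mul]
  have hfin : cutdown c ε ≤ G * x * G := by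
    have := key
    rw [hGcG, hsmul] at this
    exact le_of_add_le_add_right this
  refine (cuntzLE_of_le (cutdown_nonneg ε) hfin).trans (cuntzLE_of_conj_eq ⟨G, ?_⟩)
  rw [hGsa]

end L2

theorem stmt0 {A : Type*} [NonUnitalCStarAlgebra A] [PartialOrder A] [StarOrderedRing A]
    (a b : A) (ha : 0 ≤ a) (hb : 0 ≤ b) :
    List.TFAE
      [CuntzLE a b,
       ∀ η > (0 : ℝ), CuntzLE (cutdown a η) b,
       ∀ η > (0 : ℝ), ∃ δ > (0 : ℝ), CuntzLE (cutdown a η) (cutdown b δ)] := by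
  tfae_have 1 → 2 := by
    intro hab η hη
    obtain ⟨y, hy⟩ := hab η hη
    have hx : 0 ≤ y * b * star y := star_right_conjugate_nonneg hb y
    have h1 : CuntzLE (cutdown a η) (y * b * star y) := by
      refine cuntzLE_cutdown_of_norm_lt ha hx ?_
      rwa [norm_sub_rev]
    exact h1.trans (cuntzLE_of_conj_eq ⟨y, rfl⟩)
  tfae_have 2 → 3 := by
    intro h2 η hη
    obtain ⟨y, hy⟩ := h2 (η / 2) (by positivity) (η / 4) (by positivity)
    set δ : ℝ := η / 4 / (‖y‖ * ‖y‖ + 1) with hδdef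
    have hδ : 0 < δ := by positivity
    refine ⟨δ, hδ, ?_⟩
    set B : A := cutdown b δ with hB
    have hB0 : 0 ≤ B := cutdown_nonneg δ
    have hbd : ‖y * B * star y - y * b * star y‖ ≤ η / 4 := by
      have e : y * B * star y - y * b * star y = y * (B - b) * star y := by noncomm_ring
      rw [e]
      calc ‖y * (B - b) * star y‖ ≤ ‖y‖ * ‖B - b‖ * ‖star y‖ :=
            (norm_mul_le _ _).trans (by gcongr; exact norm_mul_le _ _)
        _ = ‖y‖ * ‖y‖ * ‖B - b‖ := by rw [norm_star]; ring
        _ ≤ (‖y‖ * ‖y‖ + 1) * δ := by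
            refine mul_le_mul (by linarith) (norm_cutdown_sub_le hb hδ.le)
              (norm_nonneg _) (by positivity)
        _ = η / 4 := by
            rw [hδdef]
            field_simp
    have hnear : ‖cutdown a (η / 2) - y * B * star y‖ < η / 2 := by
      have e : cutdown a (η / 2) - y * B * star y
          = (cutdown a (η / 2) - y * b * star y) + (y * b * star y - y * B * star y) := by
        abel
      rw [e]
      calc ‖(cutdown a (η / 2) - y * b * star y) + (y * b * star y - y * B * star y)‖
          ≤ ‖cutdown a (η / 2) - y * b * star y‖ + ‖y * b * star y - y * B * star y‖ :=
            norm_add_le _ _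
        _ < η / 4 + η / 4 := by
            refine add_lt_add_of_lt_of_le ?_ ?_
            · rwa [norm_sub_rev]
            · rwa [norm_sub_rev]
        _ = η / 2 := by ring
    have hx : 0 ≤ y * B * star y := star_right_conjugate_nonneg hB0 y
    have h1 : CuntzLE (cutdown (cutdown a (η / 2)) (η / 2)) (y * B * star y) :=
      cuntzLE_cutdown_of_norm_lt (cutdown_nonneg _) hx hnear
    rw [cutdown_cutdown ha (by positivity) (by positivity),
      show η / 2 + η / 2 = η from by ring] at h1
    exact h1.trans (cuntzLE_of_conj_eq ⟨y, rfl⟩)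
  tfae_have 3 → 1 := by
    intro h3 ε hε
    obtain ⟨δ, hδ, hcd⟩ := h3 (ε / 2) (by positivity)
    obtain ⟨z, hz⟩ := hcd (ε / 2) (by positivity)
    obtain ⟨w, hw⟩ := cutdown_eq_conj hb hδ
    refine ⟨z * w, ?_⟩
    have e : z * w * b * star (z * w) = z * cutdown b δ * star z := by
      rw [star_mul, show z * w * b * (star w * star z) = z * (w * b * star w) * star z from by
        noncomm_ring, hw]
    rw [e]
    have e2 : z * cutdown b δ * star z - a
        = (z * cutdown b δ * star z - cutdown a (ε / 2)) + (cutdown a (ε / 2) - a) := by abel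
    rw [e2]
    calc ‖(z * cutdown b δ * star z - cutdown a (ε / 2)) + (cutdown a (ε / 2) - a)‖
        ≤ ‖z * cutdown b δ * star z - cutdown a (ε / 2)‖ + ‖cutdown a (ε / 2) - a‖ :=
          norm_add_le _ _
      _ < ε / 2 + ε / 2 := add_lt_add_of_lt_of_le hz (norm_cutdown_sub_le ha (by positivity))
      _ = ε := by ring
  tfae_finish
end

section
/- Let M ∈ (0, ∞) and let f : [0, M] → ℂ be a continuous function. Then for every ε > 0 there exists δ > 0 such that whenever A is a unital C*-algebra and x, z ∈ A satisfy 0 ≤ x ≤ M·1, ‖z‖ ≤ M, and ‖xz − zx‖ < δ, then ‖f(x)z − z f(x)‖ < ε, where f(x) denotes the image of x under the continuous functional calculus applied to f. -/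
open Polynomial Finset
open scoped ComplexOrder

lemma pow_succ_comm_bound {A : Type*} [NormedRing A] (x z : A) (M : ℝ) (hx : ‖x‖ ≤ M) :
    ∀ n : ℕ, ‖x ^ (n + 1) * z - z * x ^ (n + 1)‖ ≤ ((n : ℝ) + 1) * M ^ n * ‖x * z - z * x‖ := by
  have hM0 : 0 ≤ M := le_trans (norm_nonneg x) hx
  intro n
  induction n with
  | zero => simp
  | succ n ih =>
    have key : x ^ (n + 2) * z - z * x ^ (n + 2)
        = x * (x ^ (n + 1) * z - z * x ^ (n + 1)) + (x * z - z * x) * x ^ (n + 1) := by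
      rw [show x ^ (n + 2) = x * x ^ (n + 1) from pow_succ' x (n + 1)]
      generalize x ^ (n + 1) = y
      noncomm_ring
    have hpow : ‖x ^ (n + 1)‖ ≤ M ^ (n + 1) :=
      (norm_pow_le' x n.succ_pos).trans (pow_le_pow_left₀ (norm_nonneg x) hx _)
    calc ‖x ^ (n + 1 + 1) * z - z * x ^ (n + 1 + 1)‖
        ≤ ‖x * (x ^ (n + 1) * z - z * x ^ (n + 1))‖ + ‖(x * z - z * x) * x ^ (n + 1)‖ := by
          rw [show n + 1 + 1 = n + 2 from rfl, key]; exact norm_add_le _ _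
      _ ≤ ‖x‖ * ‖x ^ (n + 1) * z - z * x ^ (n + 1)‖ + ‖x * z - z * x‖ * ‖x ^ (n + 1)‖ :=
          add_le_add (norm_mul_le _ _) (norm_mul_le _ _)
      _ ≤ M * (((n : ℝ) + 1) * M ^ n * ‖x * z - z * x‖) + ‖x * z - z * x‖ * M ^ (n + 1) := by
          refine add_le_add (mul_le_mul hx ih (norm_nonneg _) hM0) ?_
          exact mul_le_mul_of_nonneg_left hpow (norm_nonneg _)
      _ = ((n : ℝ) + 1 + 1) * M ^ (n + 1) * ‖x * z - z * x‖ := by ring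
      _ = (((n + 1 : ℕ) : ℝ) + 1) * M ^ (n + 1) * ‖x * z - z * x‖ := by push_cast; ring

lemma pow_comm_bound {A : Type*} [NormedRing A] (x z : A) (M : ℝ) (hx : ‖x‖ ≤ M) (n : ℕ) :
    ‖x ^ n * z - z * x ^ n‖ ≤ (n : ℝ) * M ^ (n - 1) * ‖x * z - z * x‖ := by
  cases n with
  | zero => simp
  | succ n => simpa [Nat.cast_succ] using pow_succ_comm_bound x z M hx n

theorem stmt5 (M : ℝ) (hM : 0 < M) (f : ℝ → ℂ) (hf : ContinuousOn f (Set.Icc 0 M))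
    (ε : ℝ) (hε : 0 < ε) :
    ∃ δ > (0 : ℝ), ∀ (A : Type) [CStarAlgebra A] [PartialOrder A] [StarOrderedRing A],
      ∀ x z : A, 0 ≤ x → x ≤ M • (1 : A) → ‖z‖ ≤ M → ‖x * z - z * x‖ < δ →
        ‖cfc (fun w : ℂ => f w.re) x * z - z * cfc (fun w : ℂ => f w.re) x‖ < ε := by
  set η : ℝ := ε / (8 * (M + 1)) with hη
  have hη0 : 0 < η := by positivity
  obtain ⟨p, hp⟩ := exists_polynomial_near_of_continuousOn 0 M (fun t => (f t).re)
      (Complex.continuous_re.comp_continuousOn hf) η hη0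
  obtain ⟨q, hq⟩ := exists_polynomial_near_of_continuousOn 0 M (fun t => (f t).im)
      (Complex.continuous_im.comp_continuousOn hf) η hη0
  set r : ℂ[X] := p.map (algebraMap ℝ ℂ) + Polynomial.C Complex.I * q.map (algebraMap ℝ ℂ)
    with hr
  -- evaluation of `r` at real points
  have hrev : ∀ t : ℝ, r.eval (t : ℂ) = ((p.eval t : ℝ) : ℂ) + Complex.I * ((q.eval t : ℝ) : ℂ) := by
    intro t
    rw [hr]
    simp only [Polynomial.eval_add, Polynomial.eval_mul, Polynomial.eval_C, Polynomial.eval_map]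
    rw [show ((t : ℂ)) = algebraMap ℝ ℂ t from rfl, Polynomial.eval₂_at_apply,
      Polynomial.eval₂_at_apply]
    simp [Complex.coe_algebraMap]
  set C : ℝ := ∑ i ∈ Finset.range (r.natDegree + 1), ‖r.coeff i‖ * ((i : ℝ) * M ^ (i - 1))
    with hC
  have hC0 : 0 ≤ C := Finset.sum_nonneg fun i _ => by positivity
  refine ⟨ε / 2 / (C + 1), by positivity, ?_⟩
  intro A _ _ _ x z hx hxM hz hcomm
  obtain hA | hA := subsingleton_or_nontrivial A
  · simpa [Subsingleton.elim (cfc (fun w : ℂ => f w.re) x * z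
      - z * cfc (fun w : ℂ => f w.re) x) 0] using hε
  have hx' : IsSelfAdjoint x := .of_nonneg hx
  have hxn : IsStarNormal x := hx'.isStarNormal
  have hxnorm : ‖x‖ ≤ M := by
    rw [CStarAlgebra.norm_le_iff_le_algebraMap x hM.le hx, Algebra.algebraMap_eq_smul_one]
    exact hxM
  -- the spectrum of x lies in [0, M] on the real axis
  have hspec : ∀ w ∈ spectrum ℂ x, w = (w.re : ℂ) ∧ w.re ∈ Set.Icc 0 M := by
    intro w hw
    have h0 : (0 : ℂ) ≤ w := spectrum_nonneg_of_nonneg hx hw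
    rw [Complex.le_def] at h0
    have him : w.im = 0 := h0.2.symm
    have hre : 0 ≤ w.re := by simpa using h0.1
    have hnw : ‖w‖ ≤ M := (spectrum.norm_le_norm_of_mem hw).trans hxnorm
    have hreM : w.re ≤ M := le_trans (le_trans (le_abs_self _) (Complex.abs_re_le_norm w)) hnw
    exact ⟨Complex.ext rfl (by simp [him]), ⟨hre, hreM⟩⟩
  have hmaps : Set.MapsTo Complex.re (spectrum ℂ x) (Set.Icc 0 M) := fun w hw => (hspec w hw).2
  have hg : ContinuousOn (fun w : ℂ => f w.re) (spectrum ℂ x) :=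
    hf.comp Complex.continuous_re.continuousOn hmaps
  set g : ℂ → ℂ := fun w : ℂ => f w.re with hgdef
  -- approximation in norm
  have hdiff : ‖cfc g x - aeval x r‖ ≤ 2 * η := by
    rw [← cfc_polynomial r x, ← cfc_sub g r.eval x]
    refine norm_cfc_le (by positivity) fun w hw => ?_
    obtain ⟨hw1, hw2⟩ := hspec w hw
    rw [hgdef]
    set t : ℝ := w.re
    have h1 : |p.eval t - (f t).re| < η := hp t hw2
    have h2 : |q.eval t - (f t).im| < η := hq t hw2
    have heq : g w - r.eval w = (((f t).re - p.eval t : ℝ) : ℂ)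
        + Complex.I * (((f t).im - q.eval t : ℝ) : ℂ) := by
      rw [hgdef]
      simp only [hw1, hrev t]
      rw [show ((t : ℂ)).re = t from rfl]
      apply Complex.ext <;> simp
    have : ‖g w - r.eval w‖ ≤ |(f t).re - p.eval t| + |(f t).im - q.eval t| := by
      rw [heq]
      calc ‖(((f t).re - p.eval t : ℝ) : ℂ) + Complex.I * (((f t).im - q.eval t : ℝ) : ℂ)‖
          ≤ ‖(((f t).re - p.eval t : ℝ) : ℂ)‖ + ‖Complex.I * (((f t).im - q.eval t : ℝ) : ℂ)‖ :=
            norm_add_le _ _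
        _ = |(f t).re - p.eval t| + |(f t).im - q.eval t| := by
            simp [← Complex.ofReal_sub]
    refine this.trans ?_
    rw [abs_sub_comm ((f t).re) _, abs_sub_comm ((f t).im) _]
    linarith
  -- commutator bound for the polynomial part
  have hcb : ‖aeval x r * z - z * aeval x r‖ ≤ C * ‖x * z - z * x‖ := by
    rw [Polynomial.aeval_eq_sum_range, Finset.sum_mul, Finset.mul_sum,
      ← Finset.sum_sub_distrib]
    refine (norm_sum_le _ _).trans ?_
    rw [hC, Finset.sum_mul]
    refine Finset.sum_le_sum fun i _ => ?_
    rw [smul_mul_assoc, mul_smul_comm, ← smul_sub, norm_smul]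
    calc ‖r.coeff i‖ * ‖x ^ i * z - z * x ^ i‖
        ≤ ‖r.coeff i‖ * ((i : ℝ) * M ^ (i - 1) * ‖x * z - z * x‖) := by
          exact mul_le_mul_of_nonneg_left (pow_comm_bound x z M hxnorm i) (norm_nonneg _)
      _ = ‖r.coeff i‖ * ((i : ℝ) * M ^ (i - 1)) * ‖x * z - z * x‖ := by ring
  -- put everything together
  set a : A := cfc g x
  set b : A := aeval x r
  have key : a * z - z * a = ((a - b) * z - z * (a - b)) + (b * z - z * b) := by noncomm_ring
  have hfirst : ‖(a - b) * z - z * (a - b)‖ ≤ ε / 2 := by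
    calc ‖(a - b) * z - z * (a - b)‖
        ≤ ‖(a - b) * z‖ + ‖z * (a - b)‖ := norm_sub_le _ _
      _ ≤ ‖a - b‖ * ‖z‖ + ‖z‖ * ‖a - b‖ := add_le_add (norm_mul_le _ _) (norm_mul_le _ _)
      _ = 2 * ‖z‖ * ‖a - b‖ := by ring
      _ ≤ 2 * M * (2 * η) := by
          have hz0 : 0 ≤ ‖z‖ := norm_nonneg _
          have := hdiff
          gcongr
      _ = M / (M + 1) * (ε / 2) := by rw [hη]; field_simp; ring
      _ ≤ 1 * (ε / 2) := by
          have h1 : M / (M + 1) ≤ 1 := (div_le_one (by linarith)).2 (by linarith)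
          exact mul_le_mul_of_nonneg_right h1 (by positivity)
      _ = ε / 2 := one_mul _
  have hsecond : ‖b * z - z * b‖ < ε / 2 := by
    refine lt_of_le_of_lt (hcb.trans (mul_le_mul_of_nonneg_left hcomm.le hC0)) ?_
    have h1 : C * (ε / 2 / (C + 1)) = C / (C + 1) * (ε / 2) := by ring
    have h2 : C / (C + 1) < 1 := (div_lt_one (by positivity)).2 (by linarith)
    calc C * (ε / 2 / (C + 1)) = C / (C + 1) * (ε / 2) := h1
      _ < 1 * (ε / 2) := by
          exact mul_lt_mul_of_pos_right h2 (by positivity)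
      _ = ε / 2 := one_mul _
  calc ‖a * z - z * a‖ ≤ ‖(a - b) * z - z * (a - b)‖ + ‖b * z - z * b‖ := by
        rw [key]; exact norm_add_le _ _
    _ < ε / 2 + ε / 2 := add_lt_add_of_le_of_lt hfirst hsecond
    _ = ε := by ring
end

section
/- Let f : [0, 1] → ℂ be a continuous function such that f(1) = 1. Then for every ε > 0 there exists δ > 0 such that whenever A is a unital C*-algebra and a, x ∈ A are positive elements satisfying ‖a‖ ≤ 1, ‖x‖ ≤ 1, and ‖a x a‖ > 1 − δ, then ‖f(a) x f(a)‖ > 1 − ε, where f(a) denotes the image of a under the continuous functional calculus applied to f. -/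
private lemma aux_norm_conj {A : Type} [CStarAlgebra A] (c d : A)
    (hc : star c = c) (hd : star d = d) :
    ‖c * (d * d) * c‖ = ‖d * (c * c) * d‖ := by
  have h1 : c * (d * d) * c = star (d * c) * (d * c) := by
    rw [star_mul, hc, hd]; noncomm_ring
  have h2 : d * (c * c) * d = (d * c) * star (d * c) := by
    rw [star_mul, hc, hd]; noncomm_ring
  rw [h1, h2, CStarRing.norm_star_mul_self, CStarRing.norm_self_mul_star]

set_option maxHeartbeats 1000000 in
theorem stmt8 (f : ℝ → ℂ) (hf : ContinuousOn f (Set.Icc 0 1)) (hf1 : f 1 = 1)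
    (ε : ℝ) (hε : 0 < ε) :
    ∃ δ > (0 : ℝ), ∀ (A : Type) [CStarAlgebra A] [PartialOrder A] [StarOrderedRing A],
      ∀ a x : A, 0 ≤ a → 0 ≤ x → ‖a‖ ≤ 1 → ‖x‖ ≤ 1 → 1 - δ < ‖a * x * a‖ →
        1 - ε < ‖cfc (fun w : ℂ => f w.re) a * x * cfc (fun w : ℂ => f w.re) a‖ := by
  obtain ⟨η, hη0, hη1, hη6⟩ : ∃ η : ℝ, 0 < η ∧ η ≤ 1 ∧ 3 * η ≤ ε / 2 :=
    ⟨min 1 (ε/6), by positivity, min_le_left _ _, by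
      have := min_le_right 1 (ε/6); linarith⟩
  have hcw : ContinuousWithinAt f (Set.Icc 0 1) 1 := hf 1 (by norm_num)
  rw [Metric.continuousWithinAt_iff] at hcw
  obtain ⟨θ, hθ0, hθ⟩ := hcw η hη0
  set t : ℝ := max 0 (1 - θ/2) with ht_def
  have ht0 : 0 ≤ t := le_max_left _ _
  have ht1 : t < 1 := max_lt one_pos (by linarith)
  have hft : ∀ s ∈ Set.Icc t 1, ‖f s - 1‖ ≤ η := by
    intro s hs
    have hs0 : (0:ℝ) ≤ s := ht0.trans hs.1
    have hst : 1 - θ/2 ≤ s := le_trans (le_max_right _ _) hs.1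
    have hd : dist s 1 < θ := by
      rw [Real.dist_eq, abs_sub_lt_iff]; constructor <;> [linarith [hs.2]; linarith]
    have := hθ ⟨hs0, hs.2⟩ hd
    rw [hf1] at this
    rw [← dist_eq_norm]
    exact this.le
  have htt : (0:ℝ) < 1 - t^2 := by nlinarith
  refine ⟨min (ε/2 * (1 - t^2)) (1/2), lt_min (by positivity) (by norm_num), ?_⟩
  intro A _ _ _ a x ha hx hna hnx hax
  rcases subsingleton_or_nontrivial A with hA | hA
  · exfalso
    have h0 : (a * x * a : A) = 0 := Subsingleton.elim _ _
    rw [h0, norm_zero] at hax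
    have : min (ε/2 * (1 - t^2)) (1/2) ≤ 1/2 := min_le_right _ _
    linarith
  -- basic facts
  have hsa : IsSelfAdjoint a := IsSelfAdjoint.of_nonneg ha
  have hspecR : ∀ s ∈ spectrum ℝ a, s ∈ Set.Icc (0:ℝ) 1 := by
    intro s hs
    refine ⟨spectrum_nonneg_of_nonneg ha hs, ?_⟩
    have := spectrum.norm_le_norm_of_mem hs
    calc s ≤ ‖s‖ := le_abs_self s
    _ ≤ 1 := this.trans hna
  have hspecC : ∀ w ∈ spectrum ℂ a, w.re ∈ Set.Icc (0:ℝ) 1 :=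
    fun w hw => hspecR _ (hsa.spectrumRestricts.apply_mem hw)
  -- the functions
  set g : ℝ → ℝ := fun s => max 0 ((s - t)/(1 - t)) with hg_def
  set h : ℝ → ℝ := fun s => Real.sqrt (g s) with hh_def
  have hgc : Continuous g := continuous_const.max ((continuous_id.sub continuous_const).div_const _)
  have hhc : Continuous h := Real.continuous_sqrt.comp hgc
  have hg0 : ∀ s, 0 ≤ g s := fun s => le_max_left _ _
  have hg1 : ∀ s, s ≤ 1 → g s ≤ 1 := by
    intro s hs
    refine max_le (by norm_num) ?_
    rw [div_le_one (by linarith)]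
    linarith
  have hh1 : ∀ s, s ≤ 1 → h s ≤ 1 := fun s hs => Real.sqrt_le_one.mpr (hg1 s hs)
  have hgt : ∀ s, s ≤ t → g s = 0 := by
    intro s hs
    exact max_eq_left (div_nonpos_of_nonpos_of_nonneg (by linarith) (by linarith))
  -- elements
  set sx : A := CFC.sqrt x with hsx_def
  have hsx0 : 0 ≤ sx := CFC.sqrt_nonneg x
  have hsxstar : star sx = sx := (IsSelfAdjoint.of_nonneg hsx0).star_eq
  have hsx2 : sx * sx = x := CFC.sqrt_mul_sqrt_self x hx
  have hastar : star a = a := hsa.star_eq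
  set b : A := cfc h a with hb_def
  have hbsa : IsSelfAdjoint b := cfc_predicate h a
  have hbn : ‖b‖ ≤ 1 := by
    refine norm_cfc_le one_pos.le fun s hs => ?_
    rw [Real.norm_eq_abs, abs_of_nonneg (Real.sqrt_nonneg _)]
    exact hh1 s (hspecR s hs).2
  -- part 1 : ‖b * x * b‖ > 1 - ε/2
  have hbxb : 1 - ε/2 < ‖b * x * b‖ := by
    have hord : a * a ≤ cfc (fun s => t^2 + (1 - t^2) * g s) a := by
      have hmul : cfc (fun s : ℝ => s * s) a = a * a := by
        rw [cfc_mul _ _ a (by fun_prop) (by fun_prop), cfc_id' ℝ a]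
      rw [← hmul]
      refine cfc_mono (fun s hs => ?_) (by fun_prop) (by fun_prop)
      obtain ⟨hs0, hs1⟩ := hspecR s hs
      rcases le_or_gt s t with hst | hst
      · have := hg0 s
        nlinarith
      · have hge : (s - t)/(1 - t) ≤ g s := le_max_right _ _
        have h1t : (0:ℝ) < 1 - t := by linarith
        have key : (1 - t^2) * ((s - t)/(1 - t)) = (1 + t) * (s - t) := by
          field_simp; ring
        nlinarith [mul_le_mul_of_nonneg_left hge (le_of_lt htt),
          mul_nonneg (sub_nonneg.2 hst.le) (sub_nonneg.2 hs1)]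
    have hconj : sx * (a * a) * sx ≤ sx * cfc (fun s => t^2 + (1 - t^2) * g s) a * sx := by
      have := star_left_conjugate_le_conjugate hord sx
      rwa [hsxstar] at this
    have hnonneg : 0 ≤ sx * (a * a) * sx := by
      have h0 : (0:A) ≤ a * a := by
        have := star_mul_self_nonneg a
        rwa [hastar] at this
      have := star_left_conjugate_nonneg h0 sx
      rwa [hsxstar] at this
    have hn2 : ‖sx * (a * a) * sx‖ ≤ ‖sx * cfc (fun s => t^2 + (1 - t^2) * g s) a * sx‖ :=
      CStarAlgebra.norm_le_norm_of_nonneg_of_le hnonneg hconj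
    have hn1 : ‖a * x * a‖ = ‖sx * (a * a) * sx‖ := by
      rw [← hsx2, aux_norm_conj a sx hastar hsxstar]
    -- split the cfc
    have hsplit : cfc (fun s => t^2 + (1 - t^2) * g s) a
        = t^2 • (1:A) + (1 - t^2) • cfc g a := by
      rw [cfc_add a _ _ (by fun_prop) (by fun_prop), cfc_const _ a,
        cfc_const_mul _ _ a (by fun_prop), Algebra.algebraMap_eq_smul_one]
    have hsplit2 : sx * cfc (fun s => t^2 + (1 - t^2) * g s) a * sx
        = t^2 • x + (1 - t^2) • (sx * cfc g a * sx) := by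
      rw [hsplit]; rw [← hsx2]; noncomm_ring
    have hn3 : ‖sx * cfc (fun s => t^2 + (1 - t^2) * g s) a * sx‖
        ≤ t^2 + (1 - t^2) * ‖b * x * b‖ := by
      rw [hsplit2]
      have hggb : cfc g a = b * b := by
        rw [hb_def, ← cfc_mul h h a (by fun_prop) (by fun_prop)]
        exact cfc_congr fun s _ => (Real.mul_self_sqrt (hg0 s)).symm
      have heq : ‖sx * cfc g a * sx‖ = ‖b * x * b‖ := by
        rw [hggb, aux_norm_conj sx b hsxstar hbsa.star_eq, hsx2]
      calc ‖t^2 • x + (1 - t^2) • (sx * cfc g a * sx)‖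
          ≤ ‖t^2 • x‖ + ‖(1 - t^2) • (sx * cfc g a * sx)‖ := norm_add_le _ _
        _ = t^2 * ‖x‖ + (1 - t^2) * ‖sx * cfc g a * sx‖ := by
            rw [norm_smul, norm_smul, Real.norm_eq_abs, Real.norm_eq_abs,
              abs_of_nonneg (by positivity), abs_of_nonneg htt.le]
        _ ≤ t^2 + (1 - t^2) * ‖b * x * b‖ := by
            rw [heq]
            have : t^2 * ‖x‖ ≤ t^2 := by nlinarith [sq_nonneg t]
            linarith
    have hδ : min (ε/2 * (1 - t^2)) (1/2) ≤ ε/2 * (1 - t^2) := min_le_left _ _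
    have hchain : 1 - ε/2 * (1 - t^2) < t^2 + (1 - t^2) * ‖b * x * b‖ := by
      calc 1 - ε/2 * (1 - t^2) ≤ 1 - min (ε/2 * (1 - t^2)) (1/2) := by linarith
      _ < ‖a * x * a‖ := hax
      _ = ‖sx * (a * a) * sx‖ := hn1
      _ ≤ _ := hn2.trans hn3
    nlinarith
  -- part 2 : from b to f(a)
  set fr : ℂ → ℂ := fun w => f w.re with hfr_def
  set fc : A := cfc fr a with hfc_def
  have hfrc : ContinuousOn fr (spectrum ℂ a) :=
    hf.comp Complex.continuous_re.continuousOn fun w hw => hspecC w hw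
  have hhcC : ContinuousOn (fun w : ℂ => (h w.re : ℂ)) (spectrum ℂ a) :=
    (Complex.continuous_ofReal.comp (hhc.comp Complex.continuous_re)).continuousOn
  have hbC : b = cfc (fun w : ℂ => (h w.re : ℂ)) a := cfc_real_eq_complex h hsa
  have hbound : ∀ w ∈ spectrum ℂ a, ‖(h w.re : ℂ) * (fr w - 1)‖ ≤ η := by
    intro w hw
    obtain ⟨hw0, hw1⟩ := hspecC w hw
    rcases le_or_gt w.re t with hwt | hwt
    · have : h w.re = 0 := by rw [hh_def]; simp [hgt _ hwt]
      simp [this, hη0.le]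
    · rw [norm_mul]
      have h1 : ‖(h w.re : ℂ)‖ ≤ 1 := by
        rw [Complex.norm_real, Real.norm_eq_abs, abs_of_nonneg (Real.sqrt_nonneg _)]
        exact hh1 _ hw1
      have h2 : ‖fr w - 1‖ ≤ η := hft w.re ⟨hwt.le, hw1⟩
      calc ‖(h w.re : ℂ)‖ * ‖fr w - 1‖ ≤ 1 * η :=
        mul_le_mul h1 h2 (norm_nonneg _) one_pos.le
      _ = η := one_mul η
  have hd1 : ‖b * fc - b‖ ≤ η := by
    have : b * fc - b = cfc (fun w : ℂ => (h w.re : ℂ) * (fr w - 1)) a := by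
      rw [hbC, hfc_def, ← cfc_mul _ _ a hhcC hfrc,
        ← cfc_sub _ _ a (by exact hhcC.mul hfrc) hhcC]
      exact cfc_congr fun w _ => by ring
    rw [this]
    exact norm_cfc_le hη0.le hbound
  have hd2 : ‖fc * b - b‖ ≤ η := by
    have : fc * b - b = cfc (fun w : ℂ => (h w.re : ℂ) * (fr w - 1)) a := by
      rw [hbC, hfc_def, ← cfc_mul _ _ a hfrc hhcC,
        ← cfc_sub _ _ a (by exact hfrc.mul hhcC) hhcC]
      exact cfc_congr fun w _ => by ring
    rw [this]
    exact norm_cfc_le hη0.le hbound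
  have hfcb : ‖fc * b‖ ≤ 1 + η := by
    calc ‖fc * b‖ = ‖(fc * b - b) + b‖ := by rw [sub_add_cancel]
    _ ≤ ‖fc * b - b‖ + ‖b‖ := norm_add_le _ _
    _ ≤ η + 1 := add_le_add hd2 hbn
    _ = 1 + η := by ring
  -- final estimate
  have hdecomp : b * (fc * x * fc) * b
      = b * x * b + (b * fc - b) * x * (fc * b) + (b * x) * (fc * b - b) := by
    noncomm_ring
  have hmain : ‖b * x * b‖ ≤ ‖fc * x * fc‖ + 3 * η := by
    have e1 : ‖b * (fc * x * fc) * b‖ ≤ ‖fc * x * fc‖ := by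
      calc ‖b * (fc * x * fc) * b‖ ≤ ‖b * (fc * x * fc)‖ * ‖b‖ := norm_mul_le _ _
      _ ≤ ‖b‖ * ‖fc * x * fc‖ * ‖b‖ :=
          mul_le_mul_of_nonneg_right (norm_mul_le _ _) (norm_nonneg _)
      _ ≤ 1 * ‖fc * x * fc‖ * 1 := by
          gcongr
      _ = ‖fc * x * fc‖ := by ring
    have e2 : ‖(b * fc - b) * x * (fc * b)‖ ≤ η * (1 + η) := by
      calc ‖(b * fc - b) * x * (fc * b)‖ ≤ ‖(b * fc - b) * x‖ * ‖fc * b‖ := norm_mul_le _ _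
      _ ≤ ‖b * fc - b‖ * ‖x‖ * ‖fc * b‖ :=
          mul_le_mul_of_nonneg_right (norm_mul_le _ _) (norm_nonneg _)
      _ ≤ η * 1 * (1 + η) := by
          gcongr
      _ = η * (1 + η) := by ring
    have e3 : ‖(b * x) * (fc * b - b)‖ ≤ η := by
      calc ‖(b * x) * (fc * b - b)‖ ≤ ‖b * x‖ * ‖fc * b - b‖ := norm_mul_le _ _
      _ ≤ (‖b‖ * ‖x‖) * ‖fc * b - b‖ :=
          mul_le_mul_of_nonneg_right (norm_mul_le _ _) (norm_nonneg _)
      _ ≤ (1 * 1) * η := by gcongr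
      _ = η := by ring
    have : ‖b * x * b‖
        ≤ ‖b * (fc * x * fc) * b‖ + ‖(b * fc - b) * x * (fc * b)‖ + ‖(b * x) * (fc * b - b)‖ := by
      have := norm_sub_le (b * (fc * x * fc) * b)
        ((b * fc - b) * x * (fc * b) + (b * x) * (fc * b - b))
      have heq : b * (fc * x * fc) * b - ((b * fc - b) * x * (fc * b) + (b * x) * (fc * b - b))
          = b * x * b := by rw [hdecomp]; noncomm_ring
      rw [heq] at this
      calc ‖b * x * b‖ ≤ ‖b * (fc * x * fc) * b‖
          + ‖(b * fc - b) * x * (fc * b) + (b * x) * (fc * b - b)‖ := this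
      _ ≤ _ := by
          have := norm_add_le ((b * fc - b) * x * (fc * b)) ((b * x) * (fc * b - b))
          linarith
    nlinarith
  calc 1 - ε = (1 - ε/2) - ε/2 := by ring
  _ < ‖b * x * b‖ - ε/2 := by linarith
  _ ≤ ‖fc * x * fc‖ + 3 * η - ε/2 := by linarith
  _ ≤ ‖fc * x * fc‖ := by linarith
end

section
/- Let A be a C*-algebra and let B ⊆ A be a C*-subalgebra. Let a, b, x ∈ A satisfy: a is positive with a ≤ 1 and ‖a‖ = 1, b is positive, b a = b, x ≠ 0, x x* ∈ B, and x* x lies in the closure of b A b. Then there exists y ∈ A such that ‖y‖ = 1, y a y* ∈ B, and ‖y a y*‖ = 1. -/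
theorem stmt10 {A : Type*} [NonUnitalCStarAlgebra A] [PartialOrder A] [StarOrderedRing A]
    (B : NonUnitalStarSubalgebra ℂ A) (hB : IsClosed (B : Set A))
    (a b x : A) (ha₀ : 0 ≤ a) (ha₁ : ‖a‖ ≤ 1) (hanorm : ‖a‖ = 1)
    (hb : 0 ≤ b) (hba : b * a = b) (hx : x ≠ 0)
    (hxxstar : x * star x ∈ B)
    (hxstarx : star x * x ∈ closure {z : A | ∃ c : A, z = b * c * b}) :
    ∃ y : A, ‖y‖ = 1 ∧ y * a * star y ∈ B ∧ ‖y * a * star y‖ = 1 := by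
  have hsa : star a = a := (IsSelfAdjoint.of_nonneg ha₀).star_eq
  -- every element of the closure of bAb is fixed by right multiplication by a
  have hclosed : IsClosed {z : A | z * a = z} :=
    isClosed_eq (continuous_id.mul continuous_const) continuous_id
  have hsub : {z : A | ∃ c : A, z = b * c * b} ⊆ {z : A | z * a = z} := by
    rintro z ⟨c, rfl⟩
    simp [mul_assoc, hba]
  have h2 : star x * x * a = star x * x := by
    have := closure_mono hsub hxstarx
    rwa [hclosed.closure_eq] at this
  have h3 : a * (star x * x) = star x * x := by
    have := congrArg star h2
    simpa [star_mul, hsa, mul_assoc] using this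
  -- x * a = x
  have e1 : star x * (x * a) = star x * x := by rw [← mul_assoc, h2]
  have e2 : a * star x * x = star x * x := by rw [mul_assoc, h3]
  have e3 : a * star x * (x * a) = star x * x := by
    rw [mul_assoc, e1, h3]
  have key : star (x - x * a) * (x - x * a) = 0 := by
    rw [star_sub, star_mul, hsa, sub_mul, mul_sub, mul_sub, e1, e2, e3]
    simp
  have hxa : x * a = x := by
    have := (CStarRing.star_mul_self_eq_zero_iff (x - x * a)).mp key
    rw [sub_eq_zero] at this
    exact this.symm
  -- normalize
  have hr : (‖x‖ : ℝ) ≠ 0 := norm_ne_zero_iff.mpr hx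
  set c : ℂ := (‖x‖ : ℂ)⁻¹ with hc
  have hcnorm : ‖c‖ = ‖x‖⁻¹ := by
    simp [hc]
  refine ⟨c • x, ?_, ?_, ?_⟩
  · rw [norm_smul, hcnorm, inv_mul_cancel₀ hr]
  · have : c • x * a * star (c • x) = (c * starRingEnd ℂ c) • (x * star x) := by
      rw [smul_mul_assoc, hxa, star_smul, mul_smul_comm, smul_mul_assoc, smul_smul,
        mul_comm (star c) c]
      rfl
    rw [this]
    exact B.smul_mem _ hxxstar
  · have heq : c • x * a * star (c • x) = (c * starRingEnd ℂ c) • (x * star x) := by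
      rw [smul_mul_assoc, hxa, star_smul, mul_smul_comm, smul_mul_assoc, smul_smul,
        mul_comm (star c) c]
      rfl
    rw [heq, norm_smul, CStarRing.norm_self_mul_star, norm_mul, hcnorm,
      RCLike.norm_conj, hcnorm]
    field_simp
end
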